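/- arXiv:1004.1003 — 3 statements merged into one kernel-verified Lean document; each statement's English description precedes it below -/
import Mathlib

section
/- Fix a matrix Y ∈ {±1}^{N×M}, a parameter δ > 0, and positive integers g_u, g_v. Let f(N, M, g_u, g_v) denote the number of equivalence classes of matrices in χ_{g_u,g_v} under entrywise sign pattern (two matrices are equivalent if every entry of one has the same sign, in {−1, 0, +1}, as the corresponding entry of the other). Then, with probability at least 1 − δ over the choice of a subset O of [N]×[M] chosen uniformly at random among all subsets of a fixed size |O|, it holds that for every X ∈ χ_{g_u,g_v}: D(X,Y) < D_O(X,Y) + sqrt( (log f(N, M, g_u, g_v) − log δ) / (2·|O|) ). -/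
/-- Zero-one sign-agreement distortion: `d(x,y) = 1` if `x·y ≤ 0`, else `0`. -/
noncomputable def d01 (x y : ℝ) : ℝ := if x * y ≤ 0 then 1 else 0

/-- Average distortion over the whole `N × M` matrix. -/
noncomputable def Davg {N M : ℕ} (X Y : Matrix (Fin N) (Fin M) ℝ) : ℝ :=
  (∑ p : Fin N × Fin M, d01 (X p.1 p.2) (Y p.1 p.2)) / (N * M)

/-- Average distortion over the observed set `O`. -/
noncomputable def Dobs {N M : ℕ} (O : Finset (Fin N × Fin M))
    (X Y : Matrix (Fin N) (Fin M) ℝ) : ℝ :=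
  (∑ p ∈ O, d01 (X p.1 p.2) (Y p.1 p.2)) / O.card

/-- The tri-factorized class `χ_{gu,gv}`. -/
def chi (N M gu gv : ℕ) : Set (Matrix (Fin N) (Fin M) ℝ) :=
  {X | ∃ (U : Matrix (Fin gu) (Fin N) ℝ) (W : Matrix (Fin gu) (Fin gv) ℝ)
      (V : Matrix (Fin gv) (Fin M) ℝ),
    (∀ i j, U i j ∈ Set.Icc (0 : ℝ) 1) ∧
    (∀ i j, W i j = 1 ∨ W i j = -1) ∧
    (∀ i j, V i j ∈ Set.Icc (0 : ℝ) 1) ∧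
    X = U.transpose * W * V}

/-- The number of sign-pattern equivalence classes of matrices in `χ_{gu,gv}`:
the cardinality of the set of entrywise sign patterns (with values in {-1,0,1})
realized by matrices of the class. -/
noncomputable def numSignClasses (N M gu gv : ℕ) : ℕ :=
  Set.ncard ((fun X : Matrix (Fin N) (Fin M) ℝ =>
    fun p : Fin N × Fin M => Real.sign (X p.1 p.2)) '' chi N M gu gv)



open Finset

variable {α : Type*} [Fintype α] [DecidableEq α]

/-- Number of `k`-subsets of the universe containing a fixed `i`-set `T`. -/
lemma card_supersets (T : Finset α) (k : ℕ) (hT : T.card ≤ k) :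
    ((powersetCard k (univ : Finset α)).filter (fun O => T ⊆ O)).card
      = (Fintype.card α - T.card).choose (k - T.card) := by
  classical
  have : ((powersetCard k (univ : Finset α)).filter (fun O => T ⊆ O)).card
      = (powersetCard (k - T.card) Tᶜ).card := by
    apply Finset.card_bij' (fun O _ => O \ T) (fun S _ => S ∪ T)
    · intro O hO
      simp only [mem_filter, mem_powersetCard] at hO
      obtain ⟨⟨-, hcard⟩, hTO⟩ := hO
      simp only [mem_powersetCard]
      constructor
      · intro x hx; simp only [Finset.mem_compl]
        exact (Finset.mem_sdiff.mp hx).2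
      · rw [Finset.card_sdiff_of_subset hTO, hcard]
    · intro S hS
      simp only [mem_powersetCard] at hS
      obtain ⟨hSc, hcard⟩ := hS
      have hdisj : Disjoint S T := by
        refine Finset.disjoint_left.mpr fun x hx hxT => ?_
        exact (Finset.mem_compl.mp (hSc hx)) hxT
      simp only [mem_filter, mem_powersetCard]
      refine ⟨⟨Finset.subset_univ _, ?_⟩, Finset.subset_union_right⟩
      rw [Finset.card_union_of_disjoint hdisj, hcard, Nat.sub_add_cancel hT]
    · intro O hO
      simp only [mem_filter, mem_powersetCard] at hO
      exact Finset.sdiff_union_of_subset hO.2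
    · intro S hS
      simp only [mem_powersetCard] at hS
      have hdisj : Disjoint S T := by
        refine Finset.disjoint_left.mpr fun x hx hxT => ?_
        exact (Finset.mem_compl.mp (hS.1 hx)) hxT
      rw [Finset.union_sdiff_distrib, Finset.sdiff_self, Finset.union_empty,
        Finset.sdiff_eq_self_of_disjoint hdisj]
  rw [this, Finset.card_powersetCard, Finset.card_compl]

/-- Double counting: sum over all `k`-subsets `O` of `choose (|B ∩ O|) i`. -/
lemma sum_choose_inter_card (B : Finset α) (i k : ℕ) (hik : i ≤ k) :
    ∑ O ∈ powersetCard k (univ : Finset α), ((B ∩ O).card.choose i)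
      = B.card.choose i * (Fintype.card α - i).choose (k - i) := by
  classical
  have key : ∀ O : Finset α, (B ∩ O).card.choose i
      = ((powersetCard i B).filter (fun T => T ⊆ O)).card := by
    intro O
    rw [← Finset.card_powersetCard]
    congr 1
    ext T
    simp only [mem_powersetCard, mem_filter, Finset.subset_inter_iff]
    tauto
  simp only [key]
  simp only [Finset.card_filter]
  rw [Finset.sum_comm]
  have step : ∀ T ∈ powersetCard i B,
      (∑ O ∈ powersetCard k (univ : Finset α), if T ⊆ O then (1:ℕ) else 0)
        = (Fintype.card α - i).choose (k - i) := by
    intro T hT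
    simp only [mem_powersetCard] at hT
    rw [← Finset.card_filter, card_supersets T k (hT.2 ▸ hik), hT.2]
  rw [Finset.sum_congr rfl step, Finset.sum_const, Finset.card_powersetCard, smul_eq_mul]

/-- `choose K i * n^i ≤ choose n i * K^i` for `K ≤ n`. -/
lemma choose_ratio_le (K n i : ℕ) (hKn : K ≤ n) :
    K.choose i * n ^ i ≤ n.choose i * K ^ i := by
  have h : K.descFactorial i * n ^ i ≤ n.descFactorial i * K ^ i := by
    rw [Nat.descFactorial_eq_prod_range, Nat.descFactorial_eq_prod_range]
    have hn : n ^ i = ∏ _m ∈ Finset.range i, n := by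
      rw [Finset.prod_const, Finset.card_range]
    have hK : K ^ i = ∏ _m ∈ Finset.range i, K := by
      rw [Finset.prod_const, Finset.card_range]
    rw [hn, hK, ← Finset.prod_mul_distrib, ← Finset.prod_mul_distrib]
    apply Finset.prod_le_prod'
    intro m _
    calc (K - m) * n = K * n - m * n := by rw [Nat.sub_mul]
      _ ≤ n * K - m * K := by
          rw [Nat.mul_comm K n]
          exact Nat.sub_le_sub_left (Nat.mul_le_mul_left m hKn) _
      _ = (n - m) * K := by rw [Nat.sub_mul]
  have hfac : (0:ℕ) < (Nat.factorial i) := Nat.factorial_pos i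
  have h2 : (Nat.factorial i) * (K.choose i * n ^ i) ≤ (Nat.factorial i) * (n.choose i * K ^ i) := by
    calc (Nat.factorial i) * (K.choose i * n ^ i) = K.descFactorial i * n ^ i := by
          rw [Nat.descFactorial_eq_factorial_mul_choose, Nat.mul_assoc]
      _ ≤ n.descFactorial i * K ^ i := h
      _ = (Nat.factorial i) * (n.choose i * K ^ i) := by
          rw [Nat.descFactorial_eq_factorial_mul_choose, Nat.mul_assoc]
  exact Nat.le_of_mul_le_mul_left h2 hfac

/-- Binomial expansion with extended range. -/
lemma binom_expand (y : ℝ) (m k : ℕ) (hmk : m ≤ k) :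
    (1 + y) ^ m = ∑ i ∈ Finset.range (k + 1), (m.choose i : ℝ) * y ^ i := by
  rw [add_comm, add_pow]
  rw [Finset.sum_subset (Finset.range_subset_range.mpr (Nat.succ_le_succ hmk))
    (fun i _ hi => by
      rw [Nat.choose_eq_zero_of_lt (by simpa using hi)]
      simp)]
  exact Finset.sum_congr rfl fun i _ => by ring

/-- MGF sum bound (Chvátal). -/
lemma mgf_sum_le (B : Finset α) (k : ℕ) (hk : k ≤ Fintype.card α)
    (hcard : 0 < Fintype.card α) {y : ℝ} (hy : 0 ≤ y) :
    ∑ O ∈ powersetCard k (univ : Finset α), (1 + y) ^ (B ∩ O).card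
      ≤ ((Fintype.card α).choose k : ℝ)
        * (1 + (B.card : ℝ) / (Fintype.card α) * y) ^ k := by
  classical
  set n := Fintype.card α
  have hexp : ∀ O ∈ powersetCard k (univ : Finset α),
      (1 + y) ^ (B ∩ O).card
        = ∑ i ∈ Finset.range (k + 1), (((B ∩ O).card.choose i : ℝ)) * y ^ i := by
    intro O hO
    simp only [mem_powersetCard] at hO
    exact binom_expand y _ k (by
      calc (B ∩ O).card ≤ O.card := Finset.card_le_card Finset.inter_subset_right
        _ = k := hO.2)
  rw [Finset.sum_congr rfl hexp, Finset.sum_comm]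
  have hswap : ∀ i ∈ Finset.range (k + 1),
      ∑ O ∈ powersetCard k (univ : Finset α), ((B ∩ O).card.choose i : ℝ) * y ^ i
        = ((B.card.choose i * (n - i).choose (k - i) : ℕ) : ℝ) * y ^ i := by
    intro i hi
    rw [← Finset.sum_mul, ← Nat.cast_sum, sum_choose_inter_card B i k
      (by simpa using Nat.lt_succ_iff.mp (Finset.mem_range.mp hi))]
  rw [Finset.sum_congr rfl hswap]
  have hterm : ∀ i ∈ Finset.range (k + 1),
      ((B.card.choose i * (n - i).choose (k - i) : ℕ) : ℝ) * y ^ i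
        ≤ (n.choose k : ℝ) * ((k.choose i : ℝ) * ((B.card : ℝ) / n * y) ^ i) := by
    intro i hi
    have hik : i ≤ k := Nat.lt_succ_iff.mp (Finset.mem_range.mp hi)
    have hBn : B.card ≤ n := by
      simpa using Finset.card_le_card (Finset.subset_univ B)
    have hnat : B.card.choose i * (n - i).choose (k - i) * n ^ i
        ≤ n.choose k * k.choose i * B.card ^ i := by
      calc B.card.choose i * (n - i).choose (k - i) * n ^ i
          = (B.card.choose i * n ^ i) * (n - i).choose (k - i) := by ring
        _ ≤ (n.choose i * B.card ^ i) * (n - i).choose (k - i) :=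
            Nat.mul_le_mul_right _ (choose_ratio_le B.card n i hBn)
        _ = (n.choose i * (n - i).choose (k - i)) * B.card ^ i := by ring
        _ = (n.choose k * k.choose i) * B.card ^ i := by
            rw [← Nat.choose_mul (n := n) hik]
  -- divide by n^i
    have hreal : ((B.card.choose i * (n - i).choose (k - i) : ℕ) : ℝ) * (n:ℝ) ^ i
        ≤ ((n.choose k * k.choose i : ℕ) : ℝ) * (B.card : ℝ) ^ i := by
      have := (Nat.cast_le (α := ℝ)).mpr hnat
      push_cast at this ⊢
      convert this using 1 <;> ring
    have hnpos : (0:ℝ) < (n:ℝ) ^ i := by positivity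
    rw [mul_pow, div_pow]
    have h2 : ((B.card.choose i * (n - i).choose (k - i) : ℕ) : ℝ)
        ≤ ((n.choose k : ℕ):ℝ) * (k.choose i : ℝ) * ((B.card:ℝ) ^ i / (n:ℝ) ^ i) := by
      rw [← mul_div_assoc, le_div_iff₀ hnpos]
      push_cast at hreal ⊢
      linarith
    calc ((B.card.choose i * (n - i).choose (k - i) : ℕ) : ℝ) * y ^ i
        ≤ (((n.choose k : ℕ):ℝ) * (k.choose i : ℝ) * ((B.card:ℝ) ^ i / (n:ℝ) ^ i)) * y ^ i :=
          mul_le_mul_of_nonneg_right h2 (by positivity)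
      _ = (n.choose k : ℝ) * ((k.choose i : ℝ) * ((B.card:ℝ) ^ i / (n:ℝ) ^ i * y ^ i)) := by ring
  calc ∑ i ∈ Finset.range (k + 1),
        ((B.card.choose i * (n - i).choose (k - i) : ℕ) : ℝ) * y ^ i
      ≤ ∑ i ∈ Finset.range (k + 1),
        (n.choose k : ℝ) * ((k.choose i : ℝ) * ((B.card : ℝ) / n * y) ^ i) :=
        Finset.sum_le_sum hterm
    _ = (n.choose k : ℝ) * ∑ i ∈ Finset.range (k + 1),
        (k.choose i : ℝ) * ((B.card : ℝ) / n * y) ^ i := by rw [Finset.mul_sum]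
    _ = (n.choose k : ℝ) * (1 + (B.card : ℝ) / n * y) ^ k := by
        rw [← binom_expand _ k k le_rfl]
open Real

private lemma den_pos {p : ℝ} (hp0 : 0 ≤ p) (hp1 : p ≤ 1) (t : ℝ) :
    0 < 1 - p + p * Real.exp t := by
  rcases eq_or_lt_of_le hp0 with h | h
  · simp [← h]
  · nlinarith [Real.exp_pos t]

private lemma hasDerivG {p : ℝ} (hp0 : 0 ≤ p) (hp1 : p ≤ 1) (t : ℝ) :
    HasDerivAt (fun t => p + t / 4 - p * Real.exp t / (1 - p + p * Real.exp t))
      (1 / 4 - (p * Real.exp t * (1 - p + p * Real.exp t) -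
        p * Real.exp t * (p * Real.exp t)) / (1 - p + p * Real.exp t) ^ 2) t := by
  have hd := den_pos hp0 hp1 t
  have h1 : HasDerivAt (fun s => p * Real.exp s) (p * Real.exp t) t :=
    (Real.hasDerivAt_exp t).const_mul p
  have h2 : HasDerivAt (fun s => 1 - p + p * Real.exp s) (p * Real.exp t) t :=
    h1.const_add _
  have h3 := h1.div h2 hd.ne'
  have h4 : HasDerivAt (fun t : ℝ => p + t / 4) (1 / 4) t := by
    simpa using ((hasDerivAt_id t).div_const 4).const_add p
  have h5 := h4.sub h3
  simp only [one_div] at h5 ⊢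
  exact h5

private lemma Gnonneg {p : ℝ} (hp0 : 0 ≤ p) (hp1 : p ≤ 1) {t : ℝ} (ht : 0 ≤ t) :
    0 ≤ p + t / 4 - p * Real.exp t / (1 - p + p * Real.exp t) := by
  set G := fun t => p + t / 4 - p * Real.exp t / (1 - p + p * Real.exp t) with hG
  have mono : Monotone G := by
    apply monotone_of_deriv_nonneg
    · intro x; exact (hasDerivG hp0 hp1 x).differentiableAt
    · intro x
      rw [(hasDerivG hp0 hp1 x).deriv]
      have hd := den_pos hp0 hp1 x
      have he := Real.exp_pos x
      rw [sub_nonneg, div_le_iff₀ (by positivity)]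
      nlinarith [sq_nonneg ((1 - p) - p * Real.exp x), mul_nonneg hp0 he.le]
  have h0 : G 0 = 0 := by simp [hG]
  have := mono ht
  rw [h0] at this
  exact this

lemma bernoulli_mgf {p : ℝ} (hp0 : 0 ≤ p) (hp1 : p ≤ 1) {t : ℝ} (ht : 0 ≤ t) :
    1 - p + p * Real.exp t ≤ Real.exp (p * t + t ^ 2 / 8) := by
  set F := fun t => p * t + t ^ 2 / 8 - Real.log (1 - p + p * Real.exp t) with hF
  have hFd : ∀ x : ℝ, HasDerivAt F
      (p + x / 4 - p * Real.exp x / (1 - p + p * Real.exp x)) x := by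
    intro x
    have hd := den_pos hp0 hp1 x
    have h1 : HasDerivAt (fun s => p * Real.exp s) (p * Real.exp x) x :=
      (Real.hasDerivAt_exp x).const_mul p
    have h2 : HasDerivAt (fun s => 1 - p + p * Real.exp s) (p * Real.exp x) x :=
      h1.const_add _
    have h3 := h2.log hd.ne'
    have h4 : HasDerivAt (fun t : ℝ => p * t + t ^ 2 / 8) (p + 2 * x / 8) x := by
      have := ((hasDerivAt_pow 2 x).div_const 8).const_add 0
      have h5 : HasDerivAt (fun t : ℝ => p * t) p x := by
        simpa using (hasDerivAt_id x).const_mul p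
      exact (h5.add ((hasDerivAt_pow 2 x).div_const 8)).congr_deriv (by norm_num)
    have := h4.sub h3
    exact this.congr_deriv (by ring)
  have mono : MonotoneOn F (Set.Ici 0) := by
    apply monotoneOn_of_deriv_nonneg (convex_Ici 0)
    · exact Continuous.continuousOn (by
        fun_prop (disch := intro x; exact (den_pos hp0 hp1 x).ne'))
    · intro x hx
      exact (hFd x).differentiableAt.differentiableWithinAt
    · intro x hx
      rw [(hFd x).deriv]
      exact Gnonneg hp0 hp1 (le_of_lt (by simpa using hx))
  have h0 : F 0 = 0 := by simp [hF]
  have hFt : 0 ≤ F t := by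
    have := mono (Set.self_mem_Ici) (Set.mem_Ici.mpr ht) ht
    rw [h0] at this; exact this
  have hd := den_pos hp0 hp1 t
  have : Real.log (1 - p + p * Real.exp t) ≤ p * t + t ^ 2 / 8 := by
    simp only [hF] at hFt; linarith
  calc 1 - p + p * Real.exp t = Real.exp (Real.log (1 - p + p * Real.exp t)) :=
        (Real.exp_log hd).symm
    _ ≤ _ := Real.exp_le_exp.mpr this

/-- Upper tail bound for sampling without replacement. -/
lemma upper_tail_count (B : Finset α) (k : ℕ) (hk : k ≤ Fintype.card α)
    (hcard : 0 < Fintype.card α) {ε : ℝ} (hε : 0 ≤ ε) :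
    (((powersetCard k (univ : Finset α)).filter (fun O =>
        (k : ℝ) * B.card / (Fintype.card α) + k * ε ≤ ((B ∩ O).card : ℝ))).card : ℝ)
      ≤ ((Fintype.card α).choose k : ℝ) * Real.exp (-2 * k * ε ^ 2) := by
  classical
  set n := Fintype.card α
  set p : ℝ := (B.card : ℝ) / n with hp
  have hp0 : 0 ≤ p := by positivity
  have hp1 : p ≤ 1 := by
    rw [hp, div_le_one (by exact_mod_cast hcard)]
    exact_mod_cast Finset.card_le_card (Finset.subset_univ B)
  set l : ℝ := 4 * ε with hl
  have hl0 : 0 ≤ l := by positivity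
  set y : ℝ := Real.exp l - 1 with hy
  have hy0 : 0 ≤ y := by
    rw [hy, sub_nonneg]
    exact Real.one_le_exp hl0
  -- Markov step
  have markov : (((powersetCard k (univ : Finset α)).filter (fun O =>
        (k : ℝ) * B.card / n + k * ε ≤ ((B ∩ O).card : ℝ))).card : ℝ)
        * Real.exp (l * ((k : ℝ) * p + k * ε))
      ≤ ∑ O ∈ powersetCard k (univ : Finset α), (1 + y) ^ (B ∩ O).card := by
    have h1 : ∀ O : Finset α, (1 + y) ^ (B ∩ O).card
        = Real.exp (l * ((B ∩ O).card : ℝ)) := by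
      intro O
      rw [hy, add_sub_cancel, ← Real.exp_nat_mul, mul_comm]
    have h2 : ∑ O ∈ powersetCard k (univ : Finset α), (1 + y) ^ (B ∩ O).card
        ≥ ∑ O ∈ (powersetCard k (univ : Finset α)).filter (fun O =>
            (k : ℝ) * B.card / n + k * ε ≤ ((B ∩ O).card : ℝ)),
          (1 + y) ^ (B ∩ O).card := by
      apply Finset.sum_le_sum_of_subset_of_nonneg (Finset.filter_subset _ _)
      intro O _ _
      positivity
    refine le_trans ?_ h2
    rw [← nsmul_eq_mul, ← Finset.sum_const]
    apply Finset.sum_le_sum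
    intro O hO
    rw [h1 O]
    apply Real.exp_le_exp.mpr
    apply mul_le_mul_of_nonneg_left _ hl0
    have hcond := (Finset.mem_filter.mp hO).2
    have : (k : ℝ) * B.card / n = (k : ℝ) * p := by
      rw [hp, mul_div_assoc]
    linarith
  have mgf := mgf_sum_le B k hk hcard hy0
  have hb : 1 + p * y ≤ Real.exp (p * l + l ^ 2 / 8) := by
    have hbm := bernoulli_mgf hp0 hp1 hl0
    calc 1 + p * y = 1 - p + p * Real.exp l := by rw [hy]; ring
      _ ≤ _ := hbm
  have hbase : (0:ℝ) ≤ 1 + p * y := by positivity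
  have hpow : (1 + p * y) ^ k ≤ Real.exp (p * l + l ^ 2 / 8) ^ k :=
    pow_le_pow_left₀ hbase hb k
  rw [← Real.exp_nat_mul] at hpow
  have hC : (0:ℝ) ≤ ((n.choose k : ℕ) : ℝ) := by positivity
  have final : (((powersetCard k (univ : Finset α)).filter (fun O =>
        (k : ℝ) * B.card / n + k * ε ≤ ((B ∩ O).card : ℝ))).card : ℝ)
        * Real.exp (l * ((k : ℝ) * p + k * ε))
      ≤ ((n.choose k : ℕ) : ℝ) * Real.exp ((k : ℝ) * (p * l + l ^ 2 / 8)) := by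
    refine le_trans markov (le_trans mgf ?_)
    exact mul_le_mul_of_nonneg_left hpow hC
  have hepos := Real.exp_pos (l * ((k : ℝ) * p + k * ε))
  have hdiv : (((powersetCard k (univ : Finset α)).filter (fun O =>
        (k : ℝ) * B.card / n + k * ε ≤ ((B ∩ O).card : ℝ))).card : ℝ)
      ≤ ((n.choose k : ℕ) : ℝ) * Real.exp ((k : ℝ) * (p * l + l ^ 2 / 8))
        / Real.exp (l * ((k : ℝ) * p + k * ε)) := by
    rw [le_div_iff₀ hepos]
    exact final
  refine le_trans hdiv ?_
  rw [mul_div_assoc, ← Real.exp_sub]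
  apply le_of_eq
  congr 1
  rw [hl]
  ring

/-- Lower tail bound for sampling without replacement. -/
lemma lower_tail_count (A : Finset α) (k : ℕ) (hk : k ≤ Fintype.card α)
    (hcard : 0 < Fintype.card α) {ε : ℝ} (hε : 0 ≤ ε) :
    (((powersetCard k (univ : Finset α)).filter (fun O =>
        ((A ∩ O).card : ℝ) ≤ (k : ℝ) * A.card / (Fintype.card α) - k * ε)).card : ℝ)
      ≤ ((Fintype.card α).choose k : ℝ) * Real.exp (-2 * k * ε ^ 2) := by
  classical
  set n := Fintype.card α
  refine le_trans ?_ (upper_tail_count Aᶜ k hk hcard hε)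
  have hsub : (powersetCard k (univ : Finset α)).filter (fun O =>
        ((A ∩ O).card : ℝ) ≤ (k : ℝ) * A.card / n - k * ε)
      ⊆ (powersetCard k (univ : Finset α)).filter (fun O =>
        (k : ℝ) * Aᶜ.card / n + k * ε ≤ ((Aᶜ ∩ O).card : ℝ)) := by
    intro O hO
    rw [Finset.mem_filter] at hO ⊢
    obtain ⟨hOk, hcond⟩ := hO
    refine ⟨hOk, ?_⟩
    have hOcard : O.card = k := (Finset.mem_powersetCard.mp hOk).2
    have hsplit : (A ∩ O).card + (Aᶜ ∩ O).card = k := by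
      rw [Finset.inter_comm, Finset.inter_comm Aᶜ O, ← Finset.sdiff_eq_inter_compl,
        Finset.card_inter_add_card_sdiff, hOcard]
    have hA_le : A.card ≤ n := by
      simpa using Finset.card_le_card (Finset.subset_univ A)
    have hnpos : (0:ℝ) < (n:ℝ) := by exact_mod_cast hcard
    have hb : ((Aᶜ ∩ O).card : ℝ) = (k : ℝ) - ((A ∩ O).card : ℝ) := by
      have : ((A ∩ O).card : ℝ) + ((Aᶜ ∩ O).card : ℝ) = (k : ℝ) := by
        exact_mod_cast congrArg (Nat.cast (R := ℝ)) hsplit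
      linarith
    have hcompl : ((Aᶜ.card : ℕ) : ℝ) = (n : ℝ) - (A.card : ℝ) := by
      rw [Finset.card_compl]
      push_cast [Nat.cast_sub hA_le]
      exact Nat.cast_sub hA_le
    rw [hb, hcompl]
    have key : (k : ℝ) * ((n : ℝ) - (A.card : ℝ)) / n
        = (k : ℝ) - (k : ℝ) * (A.card : ℝ) / n := by
      field_simp
    rw [key]
    linarith
  exact_mod_cast Nat.cast_le.mpr (Finset.card_le_card hsub)

private lemma sign_cond {x y : ℝ} (hy : y = 1 ∨ y = -1) :
    (x * y ≤ 0 ↔ Real.sign x * y ≤ 0) := by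
  rcases lt_trichotomy x 0 with hx | hx | hx
  · rw [Real.sign_of_neg hx]
    rcases hy with rfl | rfl <;> constructor <;> intro h <;> nlinarith
  · subst hx; simp [Real.sign_zero]
  · rw [Real.sign_of_pos hx]
    rcases hy with rfl | rfl <;> constructor <;> intro h <;> nlinarith

private lemma d01_sign {x y : ℝ} (hy : y = 1 ∨ y = -1) :
    d01 x y = if Real.sign x * y ≤ 0 then (1:ℝ) else 0 := by
  simp only [d01]
  rw [if_congr (sign_cond hy) rfl rfl]

open scoped Classical in
/-- Union bound step: with probability at least `1 - δ` over a uniformly random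
subset `O` of size `k`, every `X ∈ χ_{gu,gv}` satisfies
`D(X,Y) < D_O(X,Y) + sqrt((log f(N,M,gu,gv) - log δ)/(2|O|))`. -/
theorem stmt1 {N M gu gv : ℕ} (hgu : 0 < gu) (hgv : 0 < gv)
    (Y : Matrix (Fin N) (Fin M) ℝ) (hY : ∀ n m, Y n m = 1 ∨ Y n m = -1)
    (δ : ℝ) (hδ : 0 < δ) (k : ℕ) (hk0 : 0 < k) (hk : k ≤ N * M) :
    1 - δ ≤
      (((Finset.powersetCard k (Finset.univ : Finset (Fin N × Fin M))).filter
          (fun O : Finset (Fin N × Fin M) =>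
            ∀ X ∈ chi N M gu gv,
              Davg X Y < Dobs O X Y +
                Real.sqrt ((Real.log (numSignClasses N M gu gv) - Real.log δ)
                  / (2 * k)))).card : ℝ) /
        ((Finset.powersetCard k (Finset.univ : Finset (Fin N × Fin M))).card : ℝ) := by
  classical
  set n : ℕ := N * M with hn
  have hcardα : Fintype.card (Fin N × Fin M) = n := by simp [hn]
  have hPkcard : (Finset.powersetCard k (Finset.univ : Finset (Fin N × Fin M))).card
      = n.choose k := by
    rw [Finset.card_powersetCard, Finset.card_univ, hcardα]
  have hCpos : 0 < (n.choose k : ℝ) := by exact_mod_cast Nat.choose_pos hk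
  by_cases hδ1 : 1 ≤ δ
  · refine le_trans (show 1 - δ ≤ (0:ℝ) by linarith) ?_
    positivity
  push_neg at hδ1
  set f := numSignClasses N M gu gv with hf
  have hchi0 : (0 : Matrix (Fin N) (Fin M) ℝ) ∈ chi N M gu gv :=
    ⟨0, fun _ _ => 1, 0, fun i j => ⟨le_refl 0, zero_le_one⟩,
      fun i j => Or.inl rfl, fun i j => ⟨le_refl 0, zero_le_one⟩, by simp⟩
  have hfin : ((fun X : Matrix (Fin N) (Fin M) ℝ =>
      fun p : Fin N × Fin M => Real.sign (X p.1 p.2)) '' chi N M gu gv).Finite := by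
    have hpi : (Set.pi Set.univ
        (fun _ : Fin N × Fin M => ({-1, 0, 1} : Set ℝ))).Finite :=
      Set.Finite.pi (fun _ => ((Set.finite_singleton (1:ℝ)).insert 0).insert (-1))
    apply hpi.subset
    rintro g ⟨X, -, rfl⟩ p _
    rcases Real.sign_apply_eq (X p.1 p.2) with h | h | h <;> simp [h]
  set Sfin := hfin.toFinset with hSfin
  have hfcard : Sfin.card = f := by
    rw [hf, numSignClasses, Set.ncard_eq_toFinset_card _ hfin]
  have hf1 : 1 ≤ f := by
    rw [← hfcard]
    apply Finset.card_pos.mpr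
    exact ⟨_, (Set.Finite.mem_toFinset hfin).mpr ⟨0, hchi0, rfl⟩⟩
  have hfR : (1:ℝ) ≤ (f:ℝ) := by exact_mod_cast hf1
  have hfpos : (0:ℝ) < (f:ℝ) := lt_of_lt_of_le zero_lt_one hfR
  have hkR : (0:ℝ) < (k:ℝ) := by exact_mod_cast hk0
  set q := (Real.log f - Real.log δ) / (2 * k) with hq
  have hqpos : 0 < q := by
    apply div_pos
    · have h1 : 0 ≤ Real.log f := Real.log_nonneg hfR
      have h2 : Real.log δ < 0 := Real.log_neg hδ hδ1
      linarith
    · linarith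
  set ε := Real.sqrt q with hε
  have hεpos : 0 < ε := Real.sqrt_pos.mpr hqpos
  have hε2 : ε ^ 2 = q := Real.sq_sqrt hqpos.le
  set Aset : ((Fin N × Fin M) → ℝ) → Finset (Fin N × Fin M) :=
    fun g => Finset.univ.filter (fun p => g p * Y p.1 p.2 ≤ 0) with hAset
  have hDavg : ∀ X : Matrix (Fin N) (Fin M) ℝ,
      Davg X Y = ((Aset (fun p => Real.sign (X p.1 p.2))).card : ℝ) / ((N:ℝ) * M) := by
    intro X
    rw [Davg]
    congr 1
    rw [hAset, ← Finset.sum_boole]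
    exact Finset.sum_congr rfl fun p _ => d01_sign (hY p.1 p.2)
  have hDobs : ∀ (X : Matrix (Fin N) (Fin M) ℝ) (O : Finset (Fin N × Fin M)),
      Dobs O X Y = (((Aset (fun p => Real.sign (X p.1 p.2))) ∩ O).card : ℝ) / O.card := by
    intro X O
    rw [Dobs]
    congr 1
    have heq : (Aset (fun p => Real.sign (X p.1 p.2))) ∩ O
        = O.filter (fun p => Real.sign (X p.1 p.2) * Y p.1 p.2 ≤ 0) := by
      rw [hAset]
      ext p
      simp only [Finset.mem_filter, Finset.mem_inter, Finset.mem_univ, true_and]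
      tauto
    rw [heq, ← Finset.sum_boole]
    exact Finset.sum_congr rfl fun p _ => d01_sign (hY p.1 p.2)
  have key : ∀ g ∈ Sfin,
      ((((Finset.powersetCard k (Finset.univ : Finset (Fin N × Fin M))).filter
        (fun O => ((Aset g ∩ O).card : ℝ) ≤ (k:ℝ) * (Aset g).card / n - k * ε)).card : ℝ))
      ≤ (n.choose k : ℝ) * Real.exp (-2 * k * ε ^ 2) := by
    intro g _
    have h := lower_tail_count (α := Fin N × Fin M) (Aset g) k
      (by rw [hcardα]; exact hk) (by rw [hcardα]; exact lt_of_lt_of_le hk0 hk) hεpos.le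
    rw [hcardα] at h
    exact h
  have hbadsub : (Finset.powersetCard k (Finset.univ : Finset (Fin N × Fin M))).filter
      (fun O => ¬ (∀ X ∈ chi N M gu gv, Davg X Y < Dobs O X Y + ε))
      ⊆ Sfin.biUnion (fun g =>
        (Finset.powersetCard k (Finset.univ : Finset (Fin N × Fin M))).filter
          (fun O => ((Aset g ∩ O).card : ℝ) ≤ (k:ℝ) * (Aset g).card / n - k * ε)) := by
    intro O hO
    rw [Finset.mem_filter] at hO
    obtain ⟨hOPk, hbad⟩ := hO
    push_neg at hbad
    obtain ⟨X, hXchi, hle⟩ := hbad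
    rw [Finset.mem_biUnion]
    refine ⟨fun p => Real.sign (X p.1 p.2),
      (Set.Finite.mem_toFinset hfin).mpr ⟨X, hXchi, rfl⟩, ?_⟩
    rw [Finset.mem_filter]
    refine ⟨hOPk, ?_⟩
    have hOcard : O.card = k := (Finset.mem_powersetCard.mp hOPk).2
    rw [hDavg X, hDobs X O, hOcard] at hle
    set g := fun p : Fin N × Fin M => Real.sign (X p.1 p.2)
    set a := ((Aset g).card : ℝ) with ha
    set b := ((Aset g ∩ O).card : ℝ) with hb
    have h1 : b / k ≤ a / ((N:ℝ) * M) - ε := by linarith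
    have h2 : b ≤ (a / ((N:ℝ) * M) - ε) * k := (div_le_iff₀ hkR).mp h1
    have hnm : ((n:ℕ):ℝ) = (N:ℝ) * M := by rw [hn]; push_cast; ring
    have h3 : (a / ((N:ℝ) * M) - ε) * k = (k:ℝ) * a / (n:ℝ) - k * ε := by
      rw [hnm]; ring
    linarith
  have hbadcard : (((Finset.powersetCard k (Finset.univ : Finset (Fin N × Fin M))).filter
      (fun O => ¬ (∀ X ∈ chi N M gu gv, Davg X Y < Dobs O X Y + ε))).card : ℝ)
      ≤ δ * (n.choose k : ℝ) := by
    calc (((Finset.powersetCard k (Finset.univ : Finset (Fin N × Fin M))).filter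
        (fun O => ¬ (∀ X ∈ chi N M gu gv, Davg X Y < Dobs O X Y + ε))).card : ℝ)
        ≤ ((Sfin.biUnion (fun g =>
          (Finset.powersetCard k (Finset.univ : Finset (Fin N × Fin M))).filter
            (fun O => ((Aset g ∩ O).card : ℝ) ≤ (k:ℝ) * (Aset g).card / n - k * ε))).card : ℝ) := by
          exact_mod_cast Nat.cast_le.mpr (Finset.card_le_card hbadsub)
      _ ≤ ∑ g ∈ Sfin, ((((Finset.powersetCard k (Finset.univ : Finset (Fin N × Fin M))).filter
            (fun O => ((Aset g ∩ O).card : ℝ) ≤ (k:ℝ) * (Aset g).card / n - k * ε)).card : ℝ)) := by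
          exact_mod_cast Nat.cast_le.mpr Finset.card_biUnion_le
      _ ≤ ∑ _g ∈ Sfin, (n.choose k : ℝ) * Real.exp (-2 * k * ε ^ 2) :=
          Finset.sum_le_sum key
      _ = (f:ℝ) * ((n.choose k : ℝ) * Real.exp (-2 * k * ε ^ 2)) := by
          rw [Finset.sum_const, hfcard, nsmul_eq_mul]
      _ = δ * (n.choose k : ℝ) := by
          rw [hε2, hq]
          have hexp : -2 * (k:ℝ) * ((Real.log f - Real.log δ) / (2 * k))
              = Real.log δ - Real.log f := by
            field_simp
            ring
          rw [hexp, Real.exp_sub, Real.exp_log hδ, Real.exp_log hfpos]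
          field_simp
  have hsplit := Finset.card_filter_add_card_filter_not
    (s := Finset.powersetCard k (Finset.univ : Finset (Fin N × Fin M)))
    (p := fun O => ∀ X ∈ chi N M gu gv, Davg X Y < Dobs O X Y + ε)
  rw [hPkcard] at hsplit
  have hsplitR : (((Finset.powersetCard k (Finset.univ : Finset (Fin N × Fin M))).filter
      (fun O => ∀ X ∈ chi N M gu gv, Davg X Y < Dobs O X Y + ε)).card : ℝ)
      + (((Finset.powersetCard k (Finset.univ : Finset (Fin N × Fin M))).filter
      (fun O => ¬ (∀ X ∈ chi N M gu gv, Davg X Y < Dobs O X Y + ε))).card : ℝ)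
      = (n.choose k : ℝ) := by exact_mod_cast congrArg (Nat.cast (R := ℝ)) hsplit
  rw [hPkcard, le_div_iff₀ hCpos]
  linarith
end

section
/- Let n, A, d be positive integers with A ≤ n and d ≥ 1, and let b_1, …, b_n be real numbers with 1 ≤ b_s ≤ d for all s. Let b̄ = (1/n)·Σ_{s=1}^n b_s and assume b̄ ≥ (d−1)·A/n. Then Σ_{S ⊆ [n], |S| = A} Π_{s∈S} b_s ≥ C(n, A) · ( b̄ − (d−1)·A/n )^A, where C(n, A) is the binomial coefficient. -/
open Finset


lemma key_identity {n : ℕ} (b : Fin n → ℝ) (k : ℕ) :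
    ∑ T ∈ powersetCard k (univ : Finset (Fin n)),
      ((∑ t, b t) - ∑ t ∈ T, b t) * ∏ s ∈ T, b s
    = ((k : ℝ) + 1) * ∑ S ∈ powersetCard (k+1) (univ : Finset (Fin n)), ∏ s ∈ S, b s := by
  have h1 : ∀ T ∈ powersetCard k (univ : Finset (Fin n)),
      ((∑ t, b t) - ∑ t ∈ T, b t) * ∏ s ∈ T, b s
        = ∑ t ∈ Tᶜ, ∏ s ∈ insert t T, b s := by
    intro T hT
    rw [mem_powersetCard] at hT
    have h2 : ∑ t ∈ Tᶜ, b t = (∑ t, b t) - ∑ t ∈ T, b t := by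
      have := Finset.sum_compl_add_sum T b
      linarith
    rw [← h2, Finset.sum_mul]
    refine Finset.sum_congr rfl fun t ht => ?_
    rw [Finset.prod_insert (by simpa using ht)]
  rw [Finset.sum_congr rfl h1]
  rw [Finset.sum_sigma']
  have h3 : ((k : ℝ) + 1) * ∑ S ∈ powersetCard (k+1) (univ : Finset (Fin n)), ∏ s ∈ S, b s
      = ∑ S ∈ powersetCard (k+1) (univ : Finset (Fin n)), ∑ t ∈ S, ∏ s ∈ S, b s := by
    rw [Finset.mul_sum]
    refine Finset.sum_congr rfl fun S hS => ?_
    rw [mem_powersetCard] at hS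
    rw [Finset.sum_const, hS.2]
    push_cast
    ring
  rw [h3, Finset.sum_sigma']
  refine Finset.sum_nbij' (fun x => ⟨insert x.2 x.1, x.2⟩) (fun y => ⟨y.1.erase y.2, y.2⟩)
    ?_ ?_ ?_ ?_ ?_
  · rintro ⟨T, t⟩ h
    simp only [Finset.mem_sigma, mem_powersetCard] at h ⊢
    obtain ⟨⟨hTu, hTc⟩, ht⟩ := h
    have htT : t ∉ T := by simpa using ht
    exact ⟨⟨subset_univ _, by rw [card_insert_of_notMem htT, hTc]⟩, mem_insert_self _ _⟩
  · rintro ⟨S, t⟩ h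
    simp only [Finset.mem_sigma, mem_powersetCard] at h ⊢
    obtain ⟨⟨hSu, hSc⟩, ht⟩ := h
    refine ⟨⟨subset_univ _, ?_⟩, by simp⟩
    rw [card_erase_of_mem ht, hSc]
    omega
  · rintro ⟨T, t⟩ h
    simp only [Finset.mem_sigma, mem_powersetCard] at h
    have htT : t ∉ T := by simpa using h.2
    simp [Finset.erase_insert htT]
  · rintro ⟨S, t⟩ h
    simp only [Finset.mem_sigma, mem_powersetCard] at h
    simp [Finset.insert_erase h.2]
  · rintro ⟨T, t⟩ h
    rfl

/-- Lower bound on the `A`-th elementary symmetric polynomial of reals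
`b_1, …, b_n` with `1 ≤ b_s ≤ d`: it is at least
`C(n,A) · (b̄ - (d-1)A/n)^A` where `b̄` is the mean of the `b_s`. -/
theorem stmt6 {n A d : ℕ} (hA : 0 < A) (hAn : A ≤ n) (hd : 1 ≤ d)
    (b : Fin n → ℝ) (hb : ∀ s, 1 ≤ b s ∧ b s ≤ (d : ℝ))
    (bbar : ℝ) (hbbar : bbar = (∑ s, b s) / n)
    (hcond : ((d : ℝ) - 1) * A / n ≤ bbar) :
    (n.choose A : ℝ) * (bbar - ((d : ℝ) - 1) * A / n) ^ A ≤
      ∑ S ∈ Finset.powersetCard A (Finset.univ : Finset (Fin n)), ∏ s ∈ S, b s := by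
  have hn : 0 < n := lt_of_lt_of_le hA hAn
  have hN : (0:ℝ) < n := by exact_mod_cast hn
  set q : ℝ := ((d : ℝ) - 1) * A / n with hq
  set r : ℝ := bbar - q with hrdef
  have hqN : q * n = ((d:ℝ) - 1) * A := by
    rw [hq]; field_simp
  have hr0 : 0 ≤ r := by simp [hrdef]; linarith
  have prod_ge_one : ∀ S : Finset (Fin n), (1:ℝ) ≤ ∏ s ∈ S, b s := by
    intro S
    calc (1:ℝ) = ∏ _s ∈ S, (1:ℝ) := by simp
      _ ≤ ∏ s ∈ S, b s :=
        Finset.prod_le_prod (fun s _ => zero_le_one) (fun s _ => (hb s).1)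
  have card_pc : ∀ k : ℕ, (powersetCard k (univ : Finset (Fin n))).card = n.choose k := by
    intro k
    rw [Finset.card_powersetCard, Finset.card_univ, Fintype.card_fin]
  have e_ge_card : ∀ k : ℕ, (n.choose k : ℝ) ≤
      ∑ S ∈ powersetCard k (univ : Finset (Fin n)), ∏ s ∈ S, b s := by
    intro k
    calc (n.choose k : ℝ) = ∑ _S ∈ powersetCard k (univ : Finset (Fin n)), (1:ℝ) := by
          rw [Finset.sum_const, card_pc k, nsmul_eq_mul, mul_one]
      _ ≤ _ := Finset.sum_le_sum (fun S _ => prod_ge_one S)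
  by_cases hr1 : r ≤ 1
  · calc (n.choose A : ℝ) * r ^ A ≤ (n.choose A : ℝ) * 1 := by
          have : r ^ A ≤ 1 := pow_le_one₀ hr0 hr1
          exact mul_le_mul_of_nonneg_left this (by positivity)
      _ = (n.choose A : ℝ) := mul_one _
      _ ≤ _ := e_ge_card A
  · push_neg at hr1
    have hsum : ∑ s, b s = bbar * n := by
      rw [hbbar]; field_simp
    have hbd : bbar ≤ d := by
      rw [hbbar]
      rw [div_le_iff₀ hN]
      calc ∑ s, b s ≤ ∑ _s : Fin n, (d:ℝ) := Finset.sum_le_sum (fun s _ => (hb s).2)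
        _ = (d:ℝ) * n := by rw [Finset.sum_const, Finset.card_univ, Fintype.card_fin,
              nsmul_eq_mul, mul_comm]
    have hd1 : (1:ℝ) ≤ (d:ℝ) := by exact_mod_cast hd
    -- main induction
    have main : ∀ k : ℕ, k ≤ A → (n.choose k : ℝ) * r ^ k ≤
        ∑ S ∈ powersetCard k (univ : Finset (Fin n)), ∏ s ∈ S, b s := by
      intro k
      induction k with
      | zero => intro _; simp
      | succ k ih =>
        intro hk1
        have hk : k ≤ A := Nat.le_of_succ_le hk1
        have ihk := ih hk
        have hkA : (k:ℝ) ≤ (A:ℝ) := by exact_mod_cast hk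
        have hAN : (A:ℝ) ≤ (n:ℝ) := by exact_mod_cast hAn
        have hkN : (k:ℝ) ≤ (n:ℝ) := le_trans hkA hAN
        have hk0 : (0:ℝ) ≤ (k:ℝ) := Nat.cast_nonneg k
        -- coefficient bound
        have hcoef : ((n:ℝ) - k) * r ≤ (n:ℝ) * bbar - k * d := by
          have h5 : (k:ℝ) * ((d:ℝ) - bbar + q) ≤ (k:ℝ) * ((d:ℝ) - 1) :=
            mul_le_mul_of_nonneg_left (by linarith) hk0
          have h6 : (k:ℝ) * ((d:ℝ) - 1) ≤ (A:ℝ) * ((d:ℝ) - 1) :=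
            mul_le_mul_of_nonneg_right hkA (by linarith)
          nlinarith [hqN]
        -- identity and pointwise bound
        have hkey := key_identity b k
        have hpt : ∀ T ∈ powersetCard k (univ : Finset (Fin n)),
            ((n:ℝ) * bbar - k * d) * ∏ s ∈ T, b s
              ≤ ((∑ t, b t) - ∑ t ∈ T, b t) * ∏ s ∈ T, b s := by
          intro T hT
          rw [mem_powersetCard] at hT
          have hsT : ∑ t ∈ T, b t ≤ (k:ℝ) * d := by
            calc ∑ t ∈ T, b t ≤ ∑ _t ∈ T, (d:ℝ) := Finset.sum_le_sum (fun t _ => (hb t).2)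
              _ = (k:ℝ) * d := by rw [Finset.sum_const, hT.2, nsmul_eq_mul]
          have hp0 : (0:ℝ) ≤ ∏ s ∈ T, b s := le_trans zero_le_one (prod_ge_one T)
          apply mul_le_mul_of_nonneg_right _ hp0
          rw [hsum]; linarith
        have hek : (0:ℝ) ≤ ∑ S ∈ powersetCard k (univ : Finset (Fin n)), ∏ s ∈ S, b s :=
          le_trans (Nat.cast_nonneg _) (e_ge_card k)
        have step : ((n:ℝ) - k) * r *
            (∑ S ∈ powersetCard k (univ : Finset (Fin n)), ∏ s ∈ S, b s)
            ≤ ((k:ℝ) + 1) * ∑ S ∈ powersetCard (k+1) (univ : Finset (Fin n)), ∏ s ∈ S, b s := by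
          rw [← hkey]
          calc ((n:ℝ) - k) * r * (∑ S ∈ powersetCard k (univ : Finset (Fin n)), ∏ s ∈ S, b s)
              ≤ ((n:ℝ) * bbar - k * d) *
                (∑ S ∈ powersetCard k (univ : Finset (Fin n)), ∏ s ∈ S, b s) :=
                mul_le_mul_of_nonneg_right hcoef hek
            _ = ∑ T ∈ powersetCard k (univ : Finset (Fin n)),
                ((n:ℝ) * bbar - k * d) * ∏ s ∈ T, b s := by rw [Finset.mul_sum]
            _ ≤ _ := Finset.sum_le_sum hpt
        -- combine with induction hypothesis
        have hrpos : (0:ℝ) < r := lt_trans zero_lt_one hr1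
        have hnk : (0:ℝ) ≤ ((n:ℝ) - k) * r := by
          apply mul_nonneg (by linarith) hr0
        have hchain : ((n:ℝ) - k) * r * ((n.choose k : ℝ) * r ^ k) ≤
            ((k:ℝ) + 1) * ∑ S ∈ powersetCard (k+1) (univ : Finset (Fin n)), ∏ s ∈ S, b s :=
          le_trans (mul_le_mul_of_nonneg_left ihk hnk) step
        have hid : ((n:ℝ) - k) * r * ((n.choose k : ℝ) * r ^ k)
            = ((k:ℝ) + 1) * ((n.choose (k+1) : ℝ) * r ^ (k+1)) := by
          have h7 : (n.choose (k+1) * (k+1) : ℕ) = n.choose k * (n - k) :=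
            Nat.choose_succ_right_eq n k
          have h8 : ((n.choose (k+1) : ℝ)) * ((k:ℝ)+1) = (n.choose k : ℝ) * ((n:ℝ) - k) := by
            have := congrArg (fun m : ℕ => (m:ℝ)) h7
            push_cast [Nat.cast_sub (le_trans hk hAn)] at this
            convert this using 2 <;> push_cast <;> ring
          rw [pow_succ]
          linear_combination (-(r ^ k * r)) * h8
        have hk1pos : (0:ℝ) < (k:ℝ) + 1 := by positivity
        rw [hid] at hchain
        exact le_of_mul_le_mul_left hchain hk1pos
    exact main A le_rfl
end

section
/- Let n, A, d be positive integers with A ≤ n and d ≥ 1, and let b_1, …, b_n be positive integers with 1 ≤ b_s ≤ d for all s. Let b̄ = (1/n)·Σ_{s=1}^n b_s, let T = Σ_{s=1}^n b_s, and assume A ≤ T and b̄ ≥ (d−1)·A/n. Then ( Σ_{S ⊆ [n], |S| = A} Π_{s∈S} b_s ) / C(T, A) ≥ (1 − A/n)^A · (1 − (d−1)·A/(b̄·n))^A ≥ 1 − A²/n − A²·(d−1)/(b̄·n), where C(T, A) is the binomial coefficient. -/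
open Finset


/-- Double counting: `(k+1) e_{k+1} = Σ_{|S|=k} (Π_{s∈S} b_s) (Σ_{t∉S} b_t)`. -/
lemma esymm_rec {n : ℕ} (b : Fin n → ℝ) (k : ℕ) :
    ((k : ℝ) + 1) * ∑ S ∈ powersetCard (k + 1) (univ : Finset (Fin n)), ∏ s ∈ S, b s
      = ∑ S ∈ powersetCard k (univ : Finset (Fin n)),
          (∏ s ∈ S, b s) * ∑ t ∈ univ \ S, b t := by
  rw [Finset.mul_sum]
  have h1 : ∀ S ∈ powersetCard (k + 1) (univ : Finset (Fin n)),
      ((k : ℝ) + 1) * ∏ s ∈ S, b s = ∑ t ∈ S, b t * ∏ s ∈ S.erase t, b s := by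
    intro S hS
    have hcard : S.card = k + 1 := (Finset.mem_powersetCard.1 hS).2
    have h2 : ∀ t ∈ S, b t * ∏ s ∈ S.erase t, b s = ∏ s ∈ S, b s :=
      fun t ht => Finset.mul_prod_erase S b ht
    rw [Finset.sum_congr rfl h2, Finset.sum_const, hcard, nsmul_eq_mul]
    push_cast
    ring
  rw [Finset.sum_congr rfl h1]
  have h3 : ∀ S ∈ powersetCard k (univ : Finset (Fin n)),
      (∏ s ∈ S, b s) * ∑ t ∈ univ \ S, b t
        = ∑ t ∈ univ \ S, b t * ∏ s ∈ S, b s := by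
    intro S _
    rw [Finset.mul_sum]
    exact Finset.sum_congr rfl fun t _ => mul_comm _ _
  rw [Finset.sum_congr rfl h3]
  rw [Finset.sum_sigma' (powersetCard (k + 1) (univ : Finset (Fin n))) (fun S => S)
        (fun S t => b t * ∏ s ∈ S.erase t, b s),
      Finset.sum_sigma' (powersetCard k (univ : Finset (Fin n))) (fun S => univ \ S)
        (fun S t => b t * ∏ s ∈ S, b s)]
  refine Finset.sum_nbij' (fun x => ⟨x.1.erase x.2, x.2⟩) (fun y => ⟨insert y.2 y.1, y.2⟩)
    ?_ ?_ ?_ ?_ ?_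
  · rintro ⟨S, t⟩ hx
    rw [Finset.mem_sigma] at hx ⊢
    obtain ⟨hS, ht⟩ := hx
    rw [Finset.mem_powersetCard] at hS
    constructor
    · rw [Finset.mem_powersetCard]
      refine ⟨Finset.subset_univ _, ?_⟩
      rw [Finset.card_erase_of_mem ht, hS.2]
      rfl
    · simp [Finset.mem_sdiff]
  · rintro ⟨S, t⟩ hy
    rw [Finset.mem_sigma] at hy ⊢
    obtain ⟨hS, ht⟩ := hy
    rw [Finset.mem_powersetCard] at hS
    rw [Finset.mem_sdiff] at ht
    constructor
    · rw [Finset.mem_powersetCard]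
      refine ⟨Finset.subset_univ _, ?_⟩
      rw [Finset.card_insert_of_notMem ht.2, hS.2]
    · exact Finset.mem_insert_self _ _
  · rintro ⟨S, t⟩ hx
    rw [Finset.mem_sigma] at hx
    simp [Finset.insert_erase hx.2]
  · rintro ⟨S, t⟩ hy
    rw [Finset.mem_sigma, Finset.mem_sdiff] at hy
    simp [Finset.erase_insert hy.2.2]
  · rintro ⟨S, t⟩ hx
    rfl


set_option maxHeartbeats 1600000 in
/-- Probability that `A` edges attached uniformly at random to `T = Σ b_s` stubs
hit `A` distinct nodes: the ratio of the `A`-th elementary symmetric polynomial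
of the `b_s` to `C(T,A)` is at least
`(1 - A/n)^A · (1 - (d-1)A/(b̄n))^A ≥ 1 - A²/n - A²(d-1)/(b̄n)`. -/
theorem stmt7 {n A d : ℕ} (hA : 0 < A) (hAn : A ≤ n) (hd : 1 ≤ d)
    (b : Fin n → ℕ) (hb : ∀ s, 1 ≤ b s ∧ b s ≤ d)
    (T : ℕ) (hT : T = ∑ s, b s) (hAT : A ≤ T)
    (bbar : ℝ) (hbbar : bbar = ((T : ℝ)) / n)
    (hcond : ((d : ℝ) - 1) * A / n ≤ bbar) :
    (1 - (A : ℝ) / n) ^ A * (1 - ((d : ℝ) - 1) * A / (bbar * n)) ^ A ≤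
        (∑ S ∈ Finset.powersetCard A (Finset.univ : Finset (Fin n)),
          ∏ s ∈ S, (b s : ℝ)) / (T.choose A : ℝ) ∧
      1 - (A : ℝ) ^ 2 / n - (A : ℝ) ^ 2 * ((d : ℝ) - 1) / (bbar * n) ≤
        (1 - (A : ℝ) / n) ^ A * (1 - ((d : ℝ) - 1) * A / (bbar * n)) ^ A := by
  have hn : 0 < n := lt_of_lt_of_le hA hAn
  have hnR : (0 : ℝ) < n := by exact_mod_cast hn
  have hTn : n ≤ T := by
    rw [hT]
    calc n = ∑ _s : Fin n, 1 := by simp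
    _ ≤ ∑ s, b s := Finset.sum_le_sum fun s _ => (hb s).1
  have hTpos : 0 < T := lt_of_lt_of_le hn hTn
  have hTR : (0 : ℝ) < T := by exact_mod_cast hTpos
  have hbarT : bbar * n = T := by rw [hbbar]; field_simp
  have hdT : ((d : ℝ) - 1) * A ≤ T := by
    have h := hcond
    rw [hbbar] at h
    have := mul_le_mul_of_nonneg_right h (le_of_lt hnR)
    rw [div_mul_cancel₀ _ (ne_of_gt hnR), div_mul_cancel₀ _ (ne_of_gt hnR)] at this
    exact this
  have hd1 : (0 : ℝ) ≤ (d : ℝ) - 1 := by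
    have : (1 : ℝ) ≤ d := by exact_mod_cast hd
    linarith
  have hAR : (0 : ℝ) < A := by exact_mod_cast hA
  have hAnR : (A : ℝ) ≤ n := by exact_mod_cast hAn
  set c : ℝ := (1 - (A : ℝ) / n) * (1 - ((d : ℝ) - 1) * A / T) with hc
  have hfac1 : 0 ≤ 1 - (A : ℝ) / n := by
    rw [sub_nonneg, div_le_one hnR]; exact hAnR
  have hfac2 : 0 ≤ 1 - ((d : ℝ) - 1) * A / T := by
    rw [sub_nonneg, div_le_one hTR]; exact hdT
  have hc0 : 0 ≤ c := mul_nonneg hfac1 hfac2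
  -- per-subset lower bound
  have hsub : ∀ k : ℕ, k < A → ∀ S ∈ powersetCard k (univ : Finset (Fin n)),
      c * ((T : ℝ) - k) ≤ ∑ t ∈ univ \ S, (b t : ℝ) := by
    intro k hkA S hS
    rw [Finset.mem_powersetCard] at hS
    have hcardS : S.card = k := hS.2
    have hkn : k < n := lt_of_lt_of_le hkA hAn
    have hkR : (k : ℝ) < n := by exact_mod_cast hkn
    have hkA' : (k : ℝ) ≤ A := by exact_mod_cast le_of_lt hkA
    have hkT : (k : ℝ) ≤ T := le_trans hkA' (by exact_mod_cast hAT)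
    -- the complement sum
    set σ : ℝ := ∑ t ∈ univ \ S, (b t : ℝ) with hσ
    -- σ ≥ n - k
    have hge1 : (n : ℝ) - k ≤ σ := by
      have hcard : (univ \ S).card = n - k := by
        rw [Finset.card_sdiff_of_subset (Finset.subset_univ S), Finset.card_univ, Fintype.card_fin, hcardS]
      have h1 : (univ \ S).card • 1 ≤ ∑ t ∈ univ \ S, b t :=
        Finset.card_nsmul_le_sum _ _ _ fun t _ => (hb t).1
      have h2 : ((n - k : ℕ) : ℝ) ≤ σ := by
        rw [hσ]
        push_cast [← Nat.cast_sum]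
        exact_mod_cast (by simpa [hcard] using h1 : n - k ≤ ∑ t ∈ univ \ S, b t)
      rwa [Nat.cast_sub (le_of_lt hkn)] at h2
    -- σ ≥ T - k d
    have hge2 : (T : ℝ) - k * d ≤ σ := by
      have hsum : ∑ t ∈ S, b t ≤ k * d := by
        calc ∑ t ∈ S, b t ≤ ∑ _t ∈ S, d := Finset.sum_le_sum fun t _ => (hb t).2
        _ = k * d := by rw [Finset.sum_const, hcardS, smul_eq_mul]
      have hsplit : σ = (T : ℝ) - ∑ t ∈ S, (b t : ℝ) := by
        rw [hσ, Finset.sum_sdiff_eq_sub (Finset.subset_univ S), hT]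
        push_cast
        ring
      have : (∑ t ∈ S, (b t : ℝ)) ≤ (k : ℝ) * d := by exact_mod_cast hsum
      linarith [hsplit]
    -- key algebraic claim
    have hmono : c * ((T : ℝ) - k) * ((n : ℝ) * T)
        ≤ ((n : ℝ) - k) * ((T : ℝ) - ((d : ℝ) - 1) * k) * ((T : ℝ) - k) := by
      have e1 : c * ((T : ℝ) - k) * ((n : ℝ) * T)
          = (((n : ℝ) - A) * ((T : ℝ) - ((d : ℝ) - 1) * A)) * ((T : ℝ) - k) := by
        rw [hc]; field_simp
      rw [e1]
      have h1 : (n : ℝ) - A ≤ (n : ℝ) - k := by linarith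
      have h2 : (T : ℝ) - ((d : ℝ) - 1) * A ≤ (T : ℝ) - ((d : ℝ) - 1) * k := by
        nlinarith
      have h4 : (0 : ℝ) ≤ (T : ℝ) - ((d : ℝ) - 1) * A := by linarith
      have h5 : (0 : ℝ) ≤ (T : ℝ) - k := by linarith
      have h6 : (0 : ℝ) ≤ (n : ℝ) - k := by linarith
      exact mul_le_mul_of_nonneg_right (mul_le_mul h1 h2 h4 h6) h5
    set u : ℝ := (T : ℝ) - k * d with hu
    set v : ℝ := (n : ℝ) - k with hv
    have huk : u + k = (T : ℝ) - ((d : ℝ) - 1) * k := by rw [hu]; ring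
    have huk0 : 0 ≤ u + k := by rw [huk]; nlinarith
    have hv0 : 0 < v := by rw [hv]; linarith
    have hkey : v * (u + k) * ((T : ℝ) - k) ≤ max u v * ((n : ℝ) * T) := by
      have hk0 : (0 : ℝ) ≤ k := by positivity
      have hW0 : (0 : ℝ) ≤ (T : ℝ) - k := by linarith
      rcases le_total u v with h | h
      · -- max = v ; u + k ≤ n
        rw [max_eq_right h]
        have hun : u + k ≤ n := by rw [hv] at h; linarith
        have h7 : (u + k) * ((T : ℝ) - k) ≤ (n : ℝ) * T :=
          mul_le_mul hun (by linarith) hW0 (le_of_lt hnR)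
        calc v * (u + k) * ((T : ℝ) - k) = v * ((u + k) * ((T : ℝ) - k)) := by ring
          _ ≤ v * ((n : ℝ) * T) := mul_le_mul_of_nonneg_left h7 hv0.le
      · -- max = u
        rw [max_eq_left h]
        have hu0 : (0 : ℝ) ≤ u := le_trans hv0.le h
        have hnvk : (n : ℝ) = v + k := by rw [hv]; ring
        have e2 : u * ((n : ℝ) * T) - v * (u + k) * ((T : ℝ) - k)
            = k * (u * v) + k * (u * k) + k * ((u - v) * ((T : ℝ) - k)) := by
          rw [hnvk]; ring
        have t1 : 0 ≤ k * (u * v) := mul_nonneg hk0 (mul_nonneg hu0 hv0.le)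
        have t2 : 0 ≤ k * (u * k) := mul_nonneg hk0 (mul_nonneg hu0 hk0)
        have t3 : 0 ≤ k * ((u - v) * ((T : ℝ) - k)) :=
          mul_nonneg hk0 (mul_nonneg (by linarith) hW0)
        linarith
    have hmax : max u v ≤ σ := max_le hge2 hge1
    have hnT : (0 : ℝ) < (n : ℝ) * T := by positivity
    have : c * ((T : ℝ) - k) * ((n : ℝ) * T) ≤ max u v * ((n : ℝ) * T) := by
      calc c * ((T : ℝ) - k) * ((n : ℝ) * T)
          ≤ ((n : ℝ) - k) * ((T : ℝ) - ((d : ℝ) - 1) * k) * ((T : ℝ) - k) := hmono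
        _ = v * (u + k) * ((T : ℝ) - k) := by rw [huk, hv]
        _ ≤ max u v * ((n : ℝ) * T) := hkey
    have := le_of_mul_le_mul_right (by linarith : c * ((T : ℝ) - k) * ((n : ℝ) * T) ≤ max u v * ((n : ℝ) * T)) hnT
    linarith [hmax, this]
  -- the induction
  have key : ∀ k : ℕ, k ≤ A →
      c ^ k * (T.choose k : ℝ) ≤ ∑ S ∈ powersetCard k (univ : Finset (Fin n)), ∏ s ∈ S, (b s : ℝ) := by
    intro k
    induction k with
    | zero => intro _; simp
    | succ k ih =>
      intro hk
      have hkA : k < A := hk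
      have ihk := ih (le_of_lt hkA)
      have hrec := esymm_rec (fun s => (b s : ℝ)) k
      have hstep : (c * ((T : ℝ) - k)) * ∑ S ∈ powersetCard k (univ : Finset (Fin n)), ∏ s ∈ S, (b s : ℝ)
          ≤ ((k : ℝ) + 1) * ∑ S ∈ powersetCard (k + 1) (univ : Finset (Fin n)), ∏ s ∈ S, (b s : ℝ) := by
        rw [hrec, Finset.mul_sum]
        apply Finset.sum_le_sum
        intro S hS
        have hprod : 0 ≤ ∏ s ∈ S, (b s : ℝ) := Finset.prod_nonneg fun s _ => by positivity
        have := hsub k hkA S hS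
        calc c * ((T : ℝ) - k) * ∏ s ∈ S, (b s : ℝ)
            = (∏ s ∈ S, (b s : ℝ)) * (c * ((T : ℝ) - k)) := by ring
          _ ≤ (∏ s ∈ S, (b s : ℝ)) * ∑ t ∈ univ \ S, (b t : ℝ) :=
              mul_le_mul_of_nonneg_left this hprod
      -- choose recursion
      have hkT : k < T := lt_of_lt_of_le hkA hAT
      have hchoose : (T.choose (k + 1) : ℝ) * ((k : ℝ) + 1) = (T.choose k : ℝ) * ((T : ℝ) - k) := by
        have := Nat.choose_succ_right_eq T k
        have hcast : ((T.choose (k+1) * (k+1) : ℕ) : ℝ) = ((T.choose k * (T - k) : ℕ) : ℝ) := by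
          exact_mod_cast congrArg (Nat.cast (R := ℝ)) this
        push_cast [Nat.cast_sub (le_of_lt hkT)] at hcast
        linarith [hcast]
      have hk1 : (0 : ℝ) < (k : ℝ) + 1 := by positivity
      rw [← mul_le_mul_iff_right₀ hk1]
      calc ((k : ℝ) + 1) * (c ^ (k + 1) * (T.choose (k + 1) : ℝ))
          = c ^ k * ((T.choose (k + 1) : ℝ) * ((k : ℝ) + 1)) * c := by ring
        _ = c ^ k * ((T.choose k : ℝ) * ((T : ℝ) - k)) * c := by rw [hchoose]
        _ = (c * ((T : ℝ) - k)) * (c ^ k * (T.choose k : ℝ)) := by ring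
        _ ≤ (c * ((T : ℝ) - k)) * ∑ S ∈ powersetCard k (univ : Finset (Fin n)), ∏ s ∈ S, (b s : ℝ) := by
            apply mul_le_mul_of_nonneg_left ihk
            have hTk : (0 : ℝ) ≤ (T : ℝ) - k := by
              have : (k : ℝ) ≤ T := by exact_mod_cast le_of_lt hkT
              linarith
            exact mul_nonneg hc0 hTk
        _ ≤ ((k : ℝ) + 1) * ∑ S ∈ powersetCard (k + 1) (univ : Finset (Fin n)), ∏ s ∈ S, (b s : ℝ) := hstep
  have hkeyA := key A le_rfl
  have hchooseA : (0 : ℝ) < (T.choose A : ℝ) := by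
    exact_mod_cast Nat.choose_pos hAT
  constructor
  · rw [hbarT, ← mul_pow, le_div_iff₀ hchooseA, ← hc]
    exact hkeyA
  · rw [hbarT]
    set x : ℝ := (A : ℝ) / n with hx
    set y : ℝ := ((d : ℝ) - 1) * A / T with hy
    have hx0 : 0 ≤ x := by positivity
    have hy0 : 0 ≤ y := by positivity
    have hp : 1 - (A : ℝ) * x ≤ (1 - x) ^ A := by
      have := one_add_mul_le_pow (a := -x) (by linarith [hfac1] : (-2 : ℝ) ≤ -x) A
      calc 1 - (A : ℝ) * x = 1 + (A : ℝ) * (-x) := by ring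
        _ ≤ (1 + -x) ^ A := this
        _ = (1 - x) ^ A := by ring_nf
    have hq : 1 - (A : ℝ) * y ≤ (1 - y) ^ A := by
      have := one_add_mul_le_pow (a := -y) (by linarith [hfac2] : (-2 : ℝ) ≤ -y) A
      calc 1 - (A : ℝ) * y = 1 + (A : ℝ) * (-y) := by ring
        _ ≤ (1 + -y) ^ A := this
        _ = (1 - y) ^ A := by ring_nf
    have hp0 : 0 ≤ (1 - x) ^ A := pow_nonneg hfac1 A
    have hq0 : 0 ≤ (1 - y) ^ A := pow_nonneg hfac2 A
    have hgoal : 1 - (A : ℝ) * x - (A : ℝ) * y ≤ (1 - x) ^ A * (1 - y) ^ A := by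
      rcases le_or_gt (1 - (A : ℝ) * x) 0 with h | h
      · nlinarith [mul_nonneg hp0 hq0, mul_nonneg hAR.le hy0]
      · rcases le_or_gt (1 - (A : ℝ) * y) 0 with h' | h'
        · nlinarith [mul_nonneg hp0 hq0, mul_nonneg hAR.le hx0]
        · nlinarith [mul_le_mul hp hq (le_of_lt h') hp0,
            mul_nonneg (mul_nonneg hAR.le hx0) (mul_nonneg hAR.le hy0)]
    have e1 : 1 - (A : ℝ) ^ 2 / n - (A : ℝ) ^ 2 * ((d : ℝ) - 1) / T
        = 1 - (A : ℝ) * x - (A : ℝ) * y := by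
      rw [hx, hy]; field_simp
    rw [e1]
    exact hgoal
end
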